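/- Consider one GNN layer with nonnegative matrices A and B_c (c in a finite colour set C), bias vector b, aggregation maxsum_k, and a monotonically increasing activation σ, acting on a fixed vertex set: for vertex v, out(v)_i = σ( (A·in(v) + Σ_c B_c · maxsum_k{in(u) | (v,u) ∈ E_c} + b)_i ), where maxsum_k is applied componentwise. If in(u) ≤ in'(u) componentwise for all vertices u, all labelling vectors are componentwise nonnegative, and E_c ⊆ E'_c for all colours c, then out(v) ≤ out'(v) componentwise for every vertex v. -/

import Mathlib

open scoped Classical

/-- `maxsum k S` is the sum of the `min(k, |S|)` largest elements of the
finite real multiset `S` (counting multiplicity), and `0` if `k = 0` or `S` is empty. -/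
noncomputable def maxsum (k : ℕ) (S : Multiset ℝ) : ℝ :=
  ((S.sort (· ≤ ·)).reverse.take k).sum

/-- One GNN layer with input dimension `m`, output dimension `n`, matrices `A` and
`B_c`, bias `b`, aggregation `maxsum_k` (applied componentwise to the multiset of
feature vectors of the `c`-neighbours), and activation `σ`:
`out(v)_i = σ((A·in(v) + Σ_c B_c · maxsum_k{in(u) | (v,u) ∈ E_c} + b)_i)`. -/
noncomputable def layerOut {Vty C : Type} [Fintype Vty] [DecidableEq Vty] [Fintype C]
    {n m : ℕ} (A : Fin n → Fin m → ℝ) (B : C → Fin n → Fin m → ℝ) (b : Fin n → ℝ)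
    (k : ℕ) (σ : ℝ → ℝ) (E : C → Finset (Vty × Vty)) (inp : Vty → Fin m → ℝ)
    (v : Vty) (i : Fin n) : ℝ :=
  σ ((∑ j, A i j * inp v j) +
     (∑ c : C, ∑ j, B c i j *
        maxsum k ((Finset.univ.filter (fun u => (v, u) ∈ E c)).val.map (fun u => inp u j))) +
     b i)

lemma sum_le_take_sum : ∀ (L : List ℝ), L.Pairwise (· ≥ ·) → (∀ x ∈ L, 0 ≤ x) →
    ∀ (k : ℕ) (U : Multiset ℝ), U ≤ ↑L → Multiset.card U ≤ k → U.sum ≤ (L.take k).sum := by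
  intro L
  induction L with
  | nil =>
    intro _ _ k U hU _
    simp only [Multiset.coe_nil, Multiset.le_zero] at hU
    simp [hU]
  | cons a L ih =>
    intro hs hnn k U hU hcard
    by_cases ha : a ∈ U
    · obtain ⟨U', rfl⟩ : ∃ U', U = a ::ₘ U' := ⟨U.erase a, (Multiset.cons_erase ha).symm⟩
      have hU' : U' ≤ ↑L := by
        have := Multiset.erase_le_erase a hU
        simpa using this
      obtain ⟨k', rfl⟩ : ∃ k', k = k' + 1 := by
        rcases k with _ | k'
        · simp at hcard
        · exact ⟨k', rfl⟩
      have hc' : Multiset.card U' ≤ k' := by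
        simp at hcard; omega
      have := ih hs.of_cons (fun x hx => hnn x (List.mem_cons_of_mem a hx)) k' U' hU' hc'
      simpa [List.take_succ_cons] using by linarith
    · have hU' : U ≤ ↑L := by
        rw [show ((a :: L : List ℝ) : Multiset ℝ) = a ::ₘ ↑L from rfl] at hU
        exact (Multiset.le_cons_of_notMem ha).1 hU
      have h1 := ih hs.of_cons (fun x hx => hnn x (List.mem_cons_of_mem a hx)) k U hU' hcard
      refine h1.trans ?_
      rcases k with _ | k'
      · simp
      · simp only [List.take_succ_cons, List.sum_cons]
        -- (L.take (k'+1)).sum ≤ a + (L.take k').sum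
        by_cases hlen : k' < L.length
        · rw [List.sum_take_succ L k' hlen]
          have hle : L[k'] ≤ a := (List.pairwise_cons.1 hs).1 _ (List.getElem_mem hlen)
          linarith
        · rw [List.take_of_length_le (by omega), List.take_of_length_le (by omega)]
          have : 0 ≤ a := hnn a List.mem_cons_self
          linarith

lemma le_maxsum (k : ℕ) (T U : Multiset ℝ) (hT : ∀ x ∈ T, 0 ≤ x)
    (hU : U ≤ T) (hc : Multiset.card U ≤ k) : U.sum ≤ maxsum k T := by
  set L := (T.sort (· ≤ ·)).reverse with hL
  have hcoe : (↑L : Multiset ℝ) = T := by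
    rw [hL, Multiset.coe_reverse, Multiset.sort_eq]
  have hsorted : L.Pairwise (· ≥ ·) := by
    rw [hL, List.pairwise_reverse]
    exact Multiset.pairwise_sort T (· ≤ ·)
  have hnn : ∀ x ∈ L, 0 ≤ x := fun x hx => hT x (by rw [← hcoe]; exact hx)
  exact sum_le_take_sum L hsorted hnn k U (hcoe ▸ hU) hc

lemma exists_preimage {α : Type*} [DecidableEq α] (f : α → ℝ) :
    ∀ (U : Multiset ℝ) (M : Multiset α), U ≤ M.map f → ∃ M0 ≤ M, M0.map f = U := by
  intro U
  induction U using Multiset.induction_on with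
  | empty => exact fun M _ => ⟨0, Multiset.zero_le M, rfl⟩
  | cons a U' ih =>
    intro M hU
    have haM : a ∈ M.map f := Multiset.mem_of_le hU (Multiset.mem_cons_self a U')
    obtain ⟨x, hxM, rfl⟩ := Multiset.mem_map.1 haM
    have hmap : M.map f = f x ::ₘ (M.erase x).map f := by
      conv_lhs => rw [← Multiset.cons_erase hxM]
      rw [Multiset.map_cons]
    have hU' : U' ≤ (M.erase x).map f := by
      have := Multiset.erase_le_erase (f x) hU
      rw [Multiset.erase_cons_head, hmap, Multiset.erase_cons_head] at this
      exact this
    obtain ⟨M0, hM0, rfl⟩ := ih (M.erase x) hU'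
    refine ⟨x ::ₘ M0, ?_, by rw [Multiset.map_cons]⟩
    calc x ::ₘ M0 ≤ x ::ₘ M.erase x := Multiset.cons_le_cons x hM0
    _ = M := Multiset.cons_erase hxM

lemma maxsum_mono {α : Type*} [DecidableEq α] (k : ℕ) (M M' : Multiset α) (f g : α → ℝ)
    (hM : M ≤ M') (hfg : ∀ x, f x ≤ g x) (hg : ∀ x, 0 ≤ g x) :
    maxsum k (M.map f) ≤ maxsum k (M'.map g) := by
  set l := ((M.map f).sort (· ≤ ·)).reverse.take k with hl
  have hU : (↑l : Multiset ℝ) ≤ M.map f := by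
    calc (↑l : Multiset ℝ) ≤ ↑((M.map f).sort (· ≤ ·)).reverse :=
          Multiset.coe_le.2 (List.take_sublist _ _).subperm
    _ = M.map f := by rw [Multiset.coe_reverse, Multiset.sort_eq]
  obtain ⟨M0, hM0, hM0f⟩ := exists_preimage f (↑l) M hU
  have hcard : Multiset.card M0 ≤ k := by
    have : Multiset.card (M0.map f) = Multiset.card M0 := Multiset.card_map f M0
    rw [hM0f] at this
    rw [← this, Multiset.coe_card, hl]
    exact List.length_take.le.trans (min_le_left _ _)
  have h1 : maxsum k (M.map f) = ((M0.map f) : Multiset ℝ).sum := by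
    rw [hM0f]; rfl
  have h2 : (M0.map f).sum ≤ (M0.map g).sum :=
    Multiset.sum_map_le_sum_map f g fun i _ => hfg i
  have h3 : (M0.map g).sum ≤ maxsum k (M'.map g) := by
    refine le_maxsum k _ _ ?_ (Multiset.map_le_map (hM0.trans hM)) (by simpa using hcard)
    intro x hx
    obtain ⟨y, _, rfl⟩ := Multiset.mem_map.1 hx
    exact hg y
  rw [h1]; exact h2.trans h3

/-- Monotonicity of a GNN layer with nonnegative matrices, `maxsum_k` aggregation, and a
monotonically increasing activation: if the (componentwise nonnegative) input labellings
satisfy `in(u) ≤ in'(u)` componentwise for all `u` and `E_c ⊆ E'_c` for all colours,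
then `out(v) ≤ out'(v)` componentwise for all `v`. -/
theorem stmt16 {Vty C : Type} [Fintype Vty] [DecidableEq Vty] [Fintype C]
    {n m : ℕ} (A : Fin n → Fin m → ℝ) (B : C → Fin n → Fin m → ℝ) (b : Fin n → ℝ)
    (k : ℕ) (σ : ℝ → ℝ)
    (hA : ∀ i j, 0 ≤ A i j) (hB : ∀ c i j, 0 ≤ B c i j)
    (hσ : ∀ x y : ℝ, x < y → σ x ≤ σ y)
    (inp inp' : Vty → Fin m → ℝ)
    (hnn : ∀ u j, 0 ≤ inp u j) (hnn' : ∀ u j, 0 ≤ inp' u j)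
    (hle : ∀ u j, inp u j ≤ inp' u j)
    (E E' : C → Finset (Vty × Vty)) (hE : ∀ c, E c ⊆ E' c) :
    ∀ (v : Vty) (i : Fin n),
      layerOut A B b k σ E inp v i ≤ layerOut A B b k σ E' inp' v i := by
  intro v i
  unfold layerOut
  have hσmono : ∀ x y : ℝ, x ≤ y → σ x ≤ σ y := fun x y h =>
    h.lt_or_eq.elim (hσ x y) (fun e => e ▸ le_refl _)
  apply hσmono
  have h1 : (∑ j, A i j * inp v j) ≤ ∑ j, A i j * inp' v j :=
    Finset.sum_le_sum fun j _ => mul_le_mul_of_nonneg_left (hle v j) (hA i j)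
  have h2 : ∀ c : C, (∑ j, B c i j *
        maxsum k ((Finset.univ.filter (fun u => (v, u) ∈ E c)).val.map (fun u => inp u j))) ≤
      ∑ j, B c i j *
        maxsum k ((Finset.univ.filter (fun u => (v, u) ∈ E' c)).val.map (fun u => inp' u j)) := by
    intro c
    refine Finset.sum_le_sum fun j _ => mul_le_mul_of_nonneg_left ?_ (hB c i j)
    refine maxsum_mono k _ _ _ _ ?_ (fun u => hle u j) (fun u => hnn' u j)
    refine Finset.val_le_iff.2 ?_
    intro u hu
    simp only [Finset.mem_filter, Finset.mem_univ, true_and] at hu ⊢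
    exact hE c hu
  have h2' := Finset.sum_le_sum (fun c (_ : c ∈ Finset.univ) => h2 c)
  linarith
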